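/- Let Δ be a finite nonempty set and let μ be a probability measure on {0,1}^{Δ × ℤ} that is downward FKG and invariant under the shift in the second coordinate ((θη)(y,i) = η(y,i+1)). Suppose there exists ρ ∈ (0,1) such that μ(η(y,i) = 0 for all y ∈ Δ and all i ∈ {1,…,n}) ≤ (1−ρ)^n for every n ≥ 1. Define Y : {0,1}^{Δ×ℤ} → {0,1}^ℤ by Y(η)(i) = max{η(y,i) : y ∈ Δ}. Then the pushforward of μ under Y stochastically dominates the Bernoulli product measure μ_ρ on {0,1}^ℤ. (This composite of Lemmas 2.2 and 2.3 is the key step, equation (3.8), in the proof of Theorem 1.4 of the paper.) -/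

import Mathlib

set_option linter.unusedVariables false
set_option linter.unusedSectionVars false


open MeasureTheory ProbabilityTheory

/-- A measurable, increasing (upward-closed) event on `{0,1}^V`. -/
def IncreasingEvent {V : Type*} (B : Set (V → Bool)) : Prop :=
  MeasurableSet B ∧ ∀ ⦃ξ η : V → Bool⦄, ξ ≤ η → ξ ∈ B → η ∈ B

/-- A measure on `{0,1}^V` is positively associated if increasing events are
positively correlated. -/
def PositivelyAssociated {V : Type*} (μ : Measure (V → Bool)) : Prop :=
  ∀ B₁ B₂ : Set (V → Bool), IncreasingEvent B₁ → IncreasingEvent B₂ →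
    μ B₁ * μ B₂ ≤ μ (B₁ ∩ B₂)

/-- The event that the configuration is `0` everywhere on `Λ`. -/
def ZeroOn {V : Type*} (Λ : Set V) : Set (V → Bool) :=
  {η | ∀ x ∈ Λ, η x = false}

/-- Downward FKG: conditioned on being `0` on any finite set (of positive
probability), the measure is positively associated. -/
def DownwardFKG {V : Type*} (μ : Measure (V → Bool)) : Prop :=
  ∀ Λ : Finset V, 0 < μ (ZeroOn (Λ : Set V)) →
    PositivelyAssociated (μ[|ZeroOn (Λ : Set V)])

/-- `ν` is the Bernoulli product measure on `{0,1}^V` with density `ρ`: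
it is a probability measure with the i.i.d. cylinder probabilities. -/
def IsBernoulliProduct {V : Type*} (ρ : NNReal) (ν : Measure (V → Bool)) : Prop :=
  IsProbabilityMeasure ν ∧
    ∀ Δ Λ : Finset V, Disjoint Δ Λ →
      ν {η | (∀ x ∈ Δ, η x = true) ∧ (∀ x ∈ Λ, η x = false)} =
        (ρ : ENNReal) ^ Δ.card * ((1 - ρ : NNReal) : ENNReal) ^ Λ.card

/-- `μ₁` stochastically dominates `μ₂`. -/
def StochDom {V : Type*} (μ₁ μ₂ : Measure (V → Bool)) : Prop :=
  ∀ B : Set (V → Bool), IncreasingEvent B → μ₂ B ≤ μ₁ B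

/-- The column maximum `Y(η)(i) = max {η(y,i) : y ∈ Δ}`. -/
noncomputable def columnMax {Δ : Type*} [Fintype Δ] (η : Δ × ℤ → Bool) (i : ℤ) : Bool :=
  Finset.univ.sup (fun y : Δ => η (y, i))


namespace Dom

variable {V : Type*}

lemma measurableSet_pt (x : V) (b : Bool) : MeasurableSet {η : V → Bool | η x = b} :=
  by
  have : {η : V → Bool | η x = b} = (fun η : V → Bool => η x) ⁻¹' {b} := rfl
  rw [this]
  exact measurable_pi_apply x (measurableSet_singleton b)

lemma measurableSet_zeroOn {Λ : Set V} (h : Λ.Countable) : MeasurableSet (ZeroOn Λ) := by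
  have : ZeroOn Λ = ⋂ x ∈ Λ, {η : V → Bool | η x = false} := by
    ext η; simp [ZeroOn]
  rw [this]
  exact MeasurableSet.biInter h (fun x _ => measurableSet_pt x false)

lemma zeroOn_mono {Λ₁ Λ₂ : Set V} (h : Λ₁ ⊆ Λ₂) : ZeroOn Λ₂ ⊆ ZeroOn Λ₁ :=
  fun η hη x hx => hη x (h hx)

lemma zeroOn_union (Λ₁ Λ₂ : Set V) : ZeroOn (Λ₁ ∪ Λ₂) = ZeroOn Λ₁ ∩ ZeroOn Λ₂ := by
  ext η; constructor
  · intro h; exact ⟨fun x hx => h x (Or.inl hx), fun x hx => h x (Or.inr hx)⟩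
  · rintro ⟨h₁, h₂⟩ x (hx | hx); exacts [h₁ x hx, h₂ x hx]

lemma zeroOn_empty : ZeroOn (∅ : Set V) = Set.univ := by
  ext η; simp [ZeroOn]

lemma increasingEvent_compl_zeroOn {Λ : Set V} (h : Λ.Countable) :
    IncreasingEvent (ZeroOn Λ)ᶜ := by
  refine ⟨(measurableSet_zeroOn h).compl, fun ξ η hle hξ => ?_⟩
  simp only [Set.mem_compl_iff, ZeroOn, Set.mem_setOf_eq, not_forall] at hξ ⊢
  obtain ⟨x, hx, hxv⟩ := hξ
  refine ⟨x, hx, ?_⟩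
  have := hle x
  simp only [Bool.not_eq_false] at hxv ⊢
  exact Bool.le_iff_imp.mp this hxv

/-- Positive association implies positive correlation of two decreasing events
(given as complements of increasing events). -/
lemma pa_decreasing {κ : Measure (V → Bool)} [IsProbabilityMeasure κ]
    (hκ : PositivelyAssociated κ) {B₁ B₂ : Set (V → Bool)}
    (h₁ : IncreasingEvent B₁) (h₂ : IncreasingEvent B₂) :
    κ B₁ᶜ * κ B₂ᶜ ≤ κ (B₁ᶜ ∩ B₂ᶜ) := by
  have hm₁ := h₁.1; have hm₂ := h₂.1
  have hpa := hκ B₁ B₂ h₁ h₂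
  have hui : κ (B₁ ∪ B₂) + κ (B₁ ∩ B₂) = κ B₁ + κ B₂ := measure_union_add_inter B₁ hm₂
  have hc₁ : κ B₁ᶜ = 1 - κ B₁ := prob_compl_eq_one_sub hm₁
  have hc₂ : κ B₂ᶜ = 1 - κ B₂ := prob_compl_eq_one_sub hm₂
  have hcu : κ (B₁ᶜ ∩ B₂ᶜ) = 1 - κ (B₁ ∪ B₂) := by
    rw [← Set.compl_union]; exact prob_compl_eq_one_sub (hm₁.union hm₂)
  have f1 : κ B₁ ≠ ⊤ := measure_ne_top κ B₁
  have f2 : κ B₂ ≠ ⊤ := measure_ne_top κ B₂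
  have fi : κ (B₁ ∩ B₂) ≠ ⊤ := measure_ne_top κ _
  have fu : κ (B₁ ∪ B₂) ≠ ⊤ := measure_ne_top κ _
  rw [hc₁, hc₂, hcu]
  rw [← ENNReal.toReal_le_toReal (by finiteness) (by finiteness)]
  have l1 : κ B₁ ≤ 1 := prob_le_one
  have l2 : κ B₂ ≤ 1 := prob_le_one
  have lu : κ (B₁ ∪ B₂) ≤ 1 := prob_le_one
  rw [ENNReal.toReal_mul, ENNReal.toReal_sub_of_le l1 ENNReal.one_ne_top,
    ENNReal.toReal_sub_of_le l2 ENNReal.one_ne_top, ENNReal.toReal_sub_of_le lu ENNReal.one_ne_top]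
  have hui' : (κ (B₁ ∪ B₂)).toReal + (κ (B₁ ∩ B₂)).toReal
      = (κ B₁).toReal + (κ B₂).toReal := by
    rw [← ENNReal.toReal_add fu fi, ← ENNReal.toReal_add f1 f2, hui]
  have hpa' : (κ B₁).toReal * (κ B₂).toReal ≤ (κ (B₁ ∩ B₂)).toReal := by
    rw [← ENNReal.toReal_mul]
    exact ENNReal.toReal_mono fi hpa
  simp only [ENNReal.toReal_one]
  nlinarith


variable {V : Type*}

/-- `B` depends only on coordinates in `F`. -/
def DepOn (B : Set (V → Bool)) (F : Finset V) : Prop :=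
  ∀ ⦃η ξ : V → Bool⦄, (∀ i ∈ F, η i = ξ i) → η ∈ B → ξ ∈ B

lemma DepOn.mono {B : Set (V → Bool)} {F F' : Finset V} (h : DepOn B F) (hFF : F ⊆ F') :
    DepOn B F' := fun η ξ hag => h (fun i hi => hag i (hFF hi))

lemma DepOn.measurableSet {B : Set (V → Bool)} {F : Finset V} (h : DepOn B F) :
    MeasurableSet B := by
  classical
  set res : (V → Bool) → (F → Bool) := fun η i => η i.1 with hres
  have hmres : Measurable res := measurable_pi_lambda _ (fun i => measurable_pi_apply i.1)
  have hB : B = res ⁻¹' (res '' B) := by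
    apply Set.Subset.antisymm (Set.subset_preimage_image _ _)
    rintro η ⟨ξ, hξ, hξη⟩
    refine h (fun i hi => ?_) hξ
    exact congrFun hξη ⟨i, hi⟩
  rw [hB]
  exact hmres ((Set.toFinite _).countable.measurableSet)

lemma depOn_empty {B : Set (V → Bool)} (h : DepOn B (∅ : Finset V)) :
    B = ∅ ∨ B = Set.univ := by
  by_cases hne : B = ∅
  · exact Or.inl hne
  · right
    obtain ⟨η, hη⟩ := Set.nonempty_iff_ne_empty.mpr hne
    ext ξ
    simp only [Set.mem_univ, iff_true]
    exact h (by simp) hη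

variable [DecidableEq V]

lemma measurable_updateFun (x : V) (b : Bool) :
    Measurable (fun η : V → Bool => Function.update η x b) := by
  apply measurable_pi_lambda
  intro i
  by_cases hix : i = x
  · subst hix; simp only [Function.update_self]; exact measurable_const
  · simp only [Function.update_of_ne hix]; exact measurable_pi_apply i

lemma monotone_updateFun (x : V) (b : Bool) :
    Monotone (fun η : V → Bool => Function.update η x b) := by
  intro η ξ hle i
  by_cases hix : i = x
  · subst hix; simp
  · simp only [Function.update_of_ne hix]; exact hle i

lemma incr_preimage_update {B : Set (V → Bool)} (h : IncreasingEvent B)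
    (x : V) (b : Bool) : IncreasingEvent ((fun η => Function.update η x b) ⁻¹' B) :=
  ⟨h.1.preimage (measurable_updateFun x b),
   fun ξ η hle hξ => h.2 (monotone_updateFun x b hle) hξ⟩

lemma DepOn.preimage_update {B : Set (V → Bool)} {F : Finset V} (h : DepOn B F)
    (x : V) (b : Bool) : DepOn ((fun η => Function.update η x b) ⁻¹' B) (F.erase x) := by
  intro η ξ hag hη
  refine h (fun i hi => ?_) hη
  by_cases hix : i = x
  · subst hix; simp
  · simp only [Function.update_of_ne hix]
    exact hag i (Finset.mem_erase.mpr ⟨hix, hi⟩)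

lemma inter_pt_eq_update (B : Set (V → Bool)) (x : V) (b : Bool) :
    B ∩ {η | η x = b} = ((fun η => Function.update η x b) ⁻¹' B) ∩ {η | η x = b} := by
  ext η
  simp only [Set.mem_inter_iff, Set.mem_preimage, Set.mem_setOf_eq, and_congr_left_iff]
  intro hb
  have : Function.update η x b = η := by
    rw [← hb]; exact Function.update_eq_self x η
  rw [this]

lemma update_false_subset_update_true {B : Set (V → Bool)} (h : IncreasingEvent B) (x : V) :
    ((fun η => Function.update η x false) ⁻¹' B) ⊆ ((fun η => Function.update η x true) ⁻¹' B) := by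
  intro η hη
  refine h.2 (fun i => ?_) hη
  by_cases hix : i = x
  · subst hix; simp
  · simp [Function.update_of_ne hix]

lemma pt_false_eq_zeroOn (x : V) : {η : V → Bool | η x = false} = ZeroOn {x} := by
  ext η; simp [ZeroOn]

lemma increasingEvent_pt_true (x : V) : IncreasingEvent {η : V → Bool | η x = true} := by
  refine ⟨?_, fun ξ η hle hξ => ?_⟩
  · have : {η : V → Bool | η x = true} = (fun η : V → Bool => η x) ⁻¹' {true} := rfl
    rw [this]; exact measurable_pi_apply x (measurableSet_singleton true)
  · exact Bool.le_iff_imp.mp (hle x) hξ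

/-- cylinder events -/
def Cyl (Δ Λ : Finset V) : Set (V → Bool) :=
  {η | (∀ x ∈ Δ, η x = true) ∧ (∀ x ∈ Λ, η x = false)}

lemma depOn_cyl (Δ Λ : Finset V) : DepOn (Cyl Δ Λ) (Δ ∪ Λ) := by
  intro η ξ hag ⟨h1, h2⟩
  exact ⟨fun x hx => (hag x (Finset.mem_union_left _ hx)) ▸ h1 x hx,
         fun x hx => (hag x (Finset.mem_union_right _ hx)) ▸ h2 x hx⟩

lemma cyl_insert_true (Δ Λ : Finset V) (y : V) :
    Cyl (insert y Δ) Λ = Cyl Δ Λ ∩ {η | η y = true} := by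
  ext η
  simp only [Cyl, Set.mem_inter_iff, Set.mem_setOf_eq, Finset.mem_insert]
  constructor
  · rintro ⟨h1, h2⟩
    exact ⟨⟨fun x hx => h1 x (Or.inr hx), h2⟩, h1 y (Or.inl rfl)⟩
  · rintro ⟨⟨h1, h2⟩, hy⟩
    exact ⟨fun x hx => hx.elim (fun h => h ▸ hy) (h1 x), h2⟩

lemma cyl_insert_false (Δ Λ : Finset V) (y : V) :
    Cyl Δ (insert y Λ) = Cyl Δ Λ ∩ {η | η y = false} := by
  ext η
  simp only [Cyl, Set.mem_inter_iff, Set.mem_setOf_eq, Finset.mem_insert]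
  constructor
  · rintro ⟨h1, h2⟩
    exact ⟨⟨h1, fun x hx => h2 x (Or.inr hx)⟩, h2 y (Or.inl rfl)⟩
  · rintro ⟨⟨h1, h2⟩, hy⟩
    exact ⟨h1, fun x hx => hx.elim (fun h => h ▸ hy) (h2 x)⟩

/-- The key product formula: an event depending on `F` is independent of a
cylinder disjoint from `F`. -/
theorem bernoulli_product_formula {ρ : NNReal} {ν : Measure (V → Bool)}
    (hν : IsBernoulliProduct ρ ν) (F : Finset V) :
    ∀ E : Set (V → Bool), DepOn E F →
    ∀ Δ Λ : Finset V, Disjoint Δ Λ → Disjoint Δ F → Disjoint Λ F →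
      ν (E ∩ Cyl Δ Λ) =
        ν E * ((ρ : ENNReal) ^ Δ.card * ((1 - ρ : NNReal) : ENNReal) ^ Λ.card) := by
  classical
  have hP : IsProbabilityMeasure ν := hν.1
  induction F using Finset.induction_on with
  | empty =>
    intro E hE Δ Λ hΔΛ _ _
    rcases depOn_empty hE with rfl | rfl
    · simp
    · rw [Set.univ_inter, measure_univ, one_mul]
      exact hν.2 Δ Λ hΔΛ
  | @insert y F₀ hy ih =>
    intro E hE Δ Λ hΔΛ hΔF hΛF
    set E₁ := (fun η => Function.update η y true) ⁻¹' E with hE₁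
    set E₀ := (fun η => Function.update η y false) ⁻¹' E with hE₀
    have hdep₁ : DepOn E₁ F₀ := by
      have := hE.preimage_update y true
      rwa [Finset.erase_insert hy] at this
    have hdep₀ : DepOn E₀ F₀ := by
      have := hE.preimage_update y false
      rwa [Finset.erase_insert hy] at this
    have hyΔ : y ∉ Δ := fun h => (Finset.disjoint_left.mp hΔF) h (Finset.mem_insert_self y F₀)
    have hyΛ : y ∉ Λ := fun h => (Finset.disjoint_left.mp hΛF) h (Finset.mem_insert_self y F₀)
    have hΔF₀ : Disjoint Δ F₀ := hΔF.mono_right (Finset.subset_insert y F₀)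
    have hΛF₀ : Disjoint Λ F₀ := hΛF.mono_right (Finset.subset_insert y F₀)
    -- split a set along the value at y
    have hsplit : ∀ A : Set (V → Bool), MeasurableSet A →
        ν A = ν (A ∩ {η | η y = true}) + ν (A ∩ {η | η y = false}) := by
      intro A hA
      have hc : A ∩ {η | η y = false} = A \ {η | η y = true} := by
        ext η; simp [Bool.not_eq_true]
      rw [hc, measure_inter_add_diff A (measurableSet_pt y true)]
    have hmE : MeasurableSet E := hE.measurableSet
    have hmCyl : MeasurableSet (Cyl Δ Λ) := (depOn_cyl Δ Λ).measurableSet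
    -- rewrite the two pieces
    have hpiece : ∀ b : Bool, E ∩ Cyl Δ Λ ∩ {η | η y = b} =
        ((fun η => Function.update η y b) ⁻¹' E) ∩ (Cyl Δ Λ ∩ {η | η y = b}) := by
      intro b
      have := inter_pt_eq_update E y b
      ext η
      constructor
      · rintro ⟨⟨h1, h2⟩, h3⟩
        have : η ∈ ((fun η => Function.update η y b) ⁻¹' E) ∩ {η | η y = b} :=
          this ▸ ⟨h1, h3⟩
        exact ⟨this.1, h2, h3⟩
      · rintro ⟨h1, h2, h3⟩
        have : η ∈ E ∩ {η | η y = b} := (this.symm) ▸ ⟨h1, h3⟩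
        exact ⟨⟨this.1, h2⟩, h3⟩
    have hterm1 : ν (E ∩ Cyl Δ Λ ∩ {η | η y = true}) =
        ν E₁ * ((ρ : ENNReal) ^ (insert y Δ).card * ((1 - ρ : NNReal) : ENNReal) ^ Λ.card) := by
      rw [hpiece true, ← cyl_insert_true]
      exact ih E₁ hdep₁ (insert y Δ) Λ
        (Finset.disjoint_insert_left.mpr ⟨hyΛ, hΔΛ⟩)
        (Finset.disjoint_insert_left.mpr ⟨hy, hΔF₀⟩) hΛF₀
    have hterm0 : ν (E ∩ Cyl Δ Λ ∩ {η | η y = false}) =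
        ν E₀ * ((ρ : ENNReal) ^ Δ.card * ((1 - ρ : NNReal) : ENNReal) ^ (insert y Λ).card) := by
      rw [hpiece false, ← cyl_insert_false]
      exact ih E₀ hdep₀ Δ (insert y Λ)
        (Finset.disjoint_insert_right.mpr ⟨hyΔ, hΔΛ⟩) hΔF₀
        (Finset.disjoint_insert_left.mpr ⟨hy, hΛF₀⟩)
    -- decomposition of ν E itself (Δ = Λ = ∅ case of the two pieces)
    have hE_eq : ν E = ν E₁ * ρ + ν E₀ * ((1 - ρ : NNReal) : ENNReal) := by
      have h1 : ν (E ∩ {η | η y = true}) = ν E₁ * ρ := by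
        have := ih E₁ hdep₁ {y} ∅ (by simp) (by simp [hy]) (by simp)
        have hc : E₁ ∩ Cyl {y} ∅ = E ∩ {η | η y = true} := by
          have h2 : Cyl ({y} : Finset V) ∅ = {η : V → Bool | η y = true} := by
            ext η; simp [Cyl]
          rw [h2, inter_pt_eq_update E y true]
        rw [← hc, this]
        simp
      have h0 : ν (E ∩ {η | η y = false}) = ν E₀ * ((1 - ρ : NNReal) : ENNReal) := by
        have := ih E₀ hdep₀ ∅ {y} (by simp) (by simp) (by simp [hy])
        have hc : E₀ ∩ Cyl ∅ {y} = E ∩ {η | η y = false} := by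
          have h2 : Cyl (∅ : Finset V) {y} = {η : V → Bool | η y = false} := by
            ext η; simp [Cyl]
          rw [h2, inter_pt_eq_update E y false]
        rw [← hc, this]
        simp
      rw [hsplit E hmE, h1, h0]
    rw [hsplit (E ∩ Cyl Δ Λ) (hmE.inter hmCyl), hterm1, hterm0, hE_eq,
      Finset.card_insert_of_notMem hyΔ, Finset.card_insert_of_notMem hyΛ]
    ring


section Z1


variable (m : Measure (ℤ → Bool)) [IsProbabilityMeasure m]

/-- the zero-pattern function -/
noncomputable def zf (A : Finset ℤ) : ENNReal := m (ZeroOn (A : Set ℤ))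

variable {m}

lemma zf_ne_top (A : Finset ℤ) : zf m A ≠ ⊤ := measure_ne_top m _

lemma zf_le_one (A : Finset ℤ) : zf m A ≤ 1 := prob_le_one

lemma zf_empty : zf m (∅ : Finset ℤ) = 1 := by
  rw [zf, Finset.coe_empty, zeroOn_empty, measure_univ]

lemma zf_mono {A B : Finset ℤ} (h : A ⊆ B) : zf m B ≤ zf m A :=
  measure_mono (zeroOn_mono (by exact_mod_cast h))

/-- conditional positive correlation of zero events -/
lemma zf_corr
    (hPA : ∀ G : Finset ℤ, m (ZeroOn (G : Set ℤ)) ≠ 0 → PositivelyAssociated (m[|ZeroOn (G : Set ℤ)]))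
    (A B C : Finset ℤ) :
    zf m (A ∪ C) * zf m (B ∪ C) ≤ zf m (A ∪ B ∪ C) * zf m C := by
  classical
  by_cases h0 : zf m C = 0
  · have : zf m (A ∪ C) = 0 :=
      le_antisymm (le_trans (zf_mono (Finset.subset_union_right)) h0.le) (zero_le)
    rw [this, zero_mul]
    exact zero_le
  · set t := zf m C with ht
    have htop : t ≠ ⊤ := zf_ne_top C
    have hmc : MeasurableSet (ZeroOn (C : Set ℤ)) :=
      measurableSet_zeroOn (Set.Finite.countable (Finset.finite_toSet C))
    set κ := m[|ZeroOn (C : Set ℤ)] with hκ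
    haveI : IsProbabilityMeasure κ := cond_isProbabilityMeasure h0
    have hpa := pa_decreasing (hPA C h0)
      (increasingEvent_compl_zeroOn (Set.Finite.countable (Finset.finite_toSet A)))
      (increasingEvent_compl_zeroOn (Set.Finite.countable (Finset.finite_toSet B)))
    rw [compl_compl, compl_compl] at hpa
    have happ : ∀ D : Finset ℤ, κ (ZeroOn (D : Set ℤ)) = t⁻¹ * zf m (D ∪ C) := by
      intro D
      rw [hκ, cond_apply hmc, zf]
      congr 1
      rw [Finset.coe_union, zeroOn_union, Set.inter_comm]
    have hint : ZeroOn (A : Set ℤ) ∩ ZeroOn (B : Set ℤ) = ZeroOn ((A ∪ B : Finset ℤ) : Set ℤ) := by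
      rw [Finset.coe_union, zeroOn_union]
    rw [happ A, happ B, hint, happ (A ∪ B)] at hpa
    -- hpa : t⁻¹ * zf (A∪C) * (t⁻¹ * zf (B∪C)) ≤ t⁻¹ * zf (A∪B∪C)
    have hcancel : t * t⁻¹ = 1 := ENNReal.mul_inv_cancel h0 htop
    calc zf m (A ∪ C) * zf m (B ∪ C)
        = (t * t) * ((t⁻¹ * zf m (A ∪ C)) * (t⁻¹ * zf m (B ∪ C))) := by
          rw [show (t * t) * ((t⁻¹ * zf m (A ∪ C)) * (t⁻¹ * zf m (B ∪ C)))
              = (t * t⁻¹) * (t * t⁻¹) * (zf m (A ∪ C) * zf m (B ∪ C)) by ring, hcancel]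
          ring
      _ ≤ (t * t) * (t⁻¹ * zf m (A ∪ B ∪ C)) := by
          exact mul_le_mul_right hpa _
      _ = zf m (A ∪ B ∪ C) * t := by
          rw [show (t * t) * (t⁻¹ * zf m (A ∪ B ∪ C)) = (t * t⁻¹) * (zf m (A ∪ B ∪ C) * t) by ring,
            hcancel, one_mul]

lemma zf_supermul
    (hPA : ∀ G : Finset ℤ, m (ZeroOn (G : Set ℤ)) ≠ 0 → PositivelyAssociated (m[|ZeroOn (G : Set ℤ)]))
    (A B : Finset ℤ) : zf m A * zf m B ≤ zf m (A ∪ B) := by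
  have := zf_corr hPA A B ∅
  simpa [zf_empty] using this

/-- shift invariance in both directions -/
lemma zf_shift (hs : ∀ A : Finset ℤ, zf m (A.image (· + 1)) = zf m A)
    (k : ℤ) (A : Finset ℤ) : zf m (A.image (· + k)) = zf m A := by
  classical
  induction k using Int.induction_on with
  | zero => congr 1; ext i; simp
  | succ n ih =>
      have himg : A.image (· + ((n : ℤ) + 1)) = (A.image (· + (n : ℤ))).image (· + 1) := by
        ext i
        simp only [Finset.mem_image]
        constructor
        · rintro ⟨j, hj, rfl⟩; exact ⟨j + n, ⟨j, hj, rfl⟩, by ring⟩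
        · rintro ⟨j', ⟨j, hj, rfl⟩, rfl⟩; exact ⟨j, hj, by ring⟩
      rw [himg, hs, ih]
  | pred n ih =>
      have himg : A.image (· + (-(n : ℤ))) = (A.image (· + (-(n : ℤ) - 1))).image (· + 1) := by
        ext i
        simp only [Finset.mem_image]
        constructor
        · rintro ⟨j, hj, rfl⟩; exact ⟨j + (-(n : ℤ) - 1), ⟨j, hj, rfl⟩, by ring⟩
        · rintro ⟨j', ⟨j, hj, rfl⟩, rfl⟩; exact ⟨j, hj, by ring⟩
      have h1 := hs (A.image (· + (-(n : ℤ) - 1)))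
      rw [← himg] at h1
      rw [h1] at ih
      exact ih

lemma zf_Icc_shift (hs : ∀ A : Finset ℤ, zf m (A.image (· + 1)) = zf m A)
    (k a b : ℤ) : zf m (Finset.Icc (a + k) (b + k)) = zf m (Finset.Icc a b) := by
  rw [← zf_shift hs k (Finset.Icc a b)]
  congr 1
  ext i
  simp only [Finset.mem_image, Finset.mem_Icc]
  constructor
  · intro h; exact ⟨i - k, by omega, by ring⟩
  · rintro ⟨j, hj, rfl⟩; omega



end Z1
section Z2
variable {m : Measure (ℤ → Bool)} [IsProbabilityMeasure m]
variable (hPA : ∀ G : Finset ℤ, m (ZeroOn (G : Set ℤ)) ≠ 0 →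
    PositivelyAssociated (m[|ZeroOn (G : Set ℤ)]))
  (hs : ∀ A : Finset ℤ, zf m (A.image (· + 1)) = zf m A)

lemma zf_Icc_union (n k : ℕ) :
    Finset.Icc (1:ℤ) n ∪ Finset.Icc ((n:ℤ)+1) ((n:ℤ)+k) = Finset.Icc (1:ℤ) ((n:ℤ)+k) := by
  ext i
  simp only [Finset.mem_union, Finset.mem_Icc]
  omega

include hPA hs in
lemma zf_Icc_supermul (n k : ℕ) :
    zf m (Finset.Icc (1:ℤ) n) * zf m (Finset.Icc (1:ℤ) k) ≤ zf m (Finset.Icc (1:ℤ) ((n:ℤ)+k)) := by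
  have h1 : zf m (Finset.Icc ((n:ℤ)+1) ((n:ℤ)+k)) = zf m (Finset.Icc (1:ℤ) k) := by
    have := zf_Icc_shift hs (n:ℤ) 1 k
    rw [add_comm 1 (n:ℤ), add_comm (k:ℤ) (n:ℤ)] at this
    exact this
  calc zf m (Finset.Icc (1:ℤ) n) * zf m (Finset.Icc (1:ℤ) k)
      = zf m (Finset.Icc (1:ℤ) n) * zf m (Finset.Icc ((n:ℤ)+1) ((n:ℤ)+k)) := by rw [h1]
    _ ≤ zf m (Finset.Icc (1:ℤ) n ∪ Finset.Icc ((n:ℤ)+1) ((n:ℤ)+k)) := zf_supermul hPA _ _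
    _ = zf m (Finset.Icc (1:ℤ) ((n:ℤ)+k)) := by rw [zf_Icc_union]

include hPA hs in
lemma zf_Icc_pos (h1 : zf m (Finset.Icc (1:ℤ) 1) ≠ 0) (n : ℕ) :
    zf m (Finset.Icc (1:ℤ) (n:ℤ)) ≠ 0 := by
  induction n with
  | zero => simp [show Finset.Icc (1:ℤ) (0:ℤ) = ∅ from Finset.Icc_eq_empty (by omega), zf_empty]
  | succ k ih =>
      have := zf_Icc_supermul hPA hs k 1
      have hne : zf m (Finset.Icc (1:ℤ) k) * zf m (Finset.Icc (1:ℤ) 1) ≠ 0 :=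
        mul_ne_zero ih h1
      intro h0
      norm_cast at this
      rw [h0] at this
      exact hne (le_antisymm this (zero_le))

include hPA hs in
lemma zf_Icc_logconvex (n : ℕ) :
    zf m (Finset.Icc (1:ℤ) ((n:ℤ)+1)) * zf m (Finset.Icc (1:ℤ) ((n:ℤ)+1)) ≤
      zf m (Finset.Icc (1:ℤ) ((n:ℤ)+2)) * zf m (Finset.Icc (1:ℤ) (n:ℤ)) := by
  have h := zf_corr hPA {(1:ℤ)} {(n:ℤ)+2} (Finset.Icc 2 ((n:ℤ)+1))
  have e1 : ({(1:ℤ)} : Finset ℤ) ∪ Finset.Icc 2 ((n:ℤ)+1) = Finset.Icc (1:ℤ) ((n:ℤ)+1) := by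
    ext i; simp only [Finset.mem_union, Finset.mem_singleton, Finset.mem_Icc]; omega
  have e2 : ({(n:ℤ)+2} : Finset ℤ) ∪ Finset.Icc 2 ((n:ℤ)+1) = Finset.Icc (2:ℤ) ((n:ℤ)+2) := by
    ext i; simp only [Finset.mem_union, Finset.mem_singleton, Finset.mem_Icc]; omega
  have e3 : ({(1:ℤ)} : Finset ℤ) ∪ ({(n:ℤ)+2} : Finset ℤ) ∪ Finset.Icc 2 ((n:ℤ)+1)
      = Finset.Icc (1:ℤ) ((n:ℤ)+2) := by
    ext i; simp only [Finset.mem_union, Finset.mem_singleton, Finset.mem_Icc]; omega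
  rw [e1, e2, e3] at h
  have s1 : zf m (Finset.Icc (2:ℤ) ((n:ℤ)+2)) = zf m (Finset.Icc (1:ℤ) ((n:ℤ)+1)) := by
    have := zf_Icc_shift hs 1 1 ((n:ℤ)+1)
    rw [show (1:ℤ)+1 = 2 by ring] at this
    exact this
  have s2 : zf m (Finset.Icc (2:ℤ) ((n:ℤ)+1)) = zf m (Finset.Icc (1:ℤ) (n:ℤ)) := by
    have := zf_Icc_shift hs 1 1 (n:ℤ)
    rw [show (1:ℤ)+1 = 2 by ring] at this
    rw [show (n:ℤ)+1 = (n:ℤ)+1 by ring] at this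
    exact this
  rw [s1, s2] at h
  exact h

include hPA hs in
/-- The crucial step: ratio bound from log-convexity, supermultiplicativity and
the exponential bound. -/
lemma zf_step {c : ENNReal} (hc0 : c ≠ 0) (hctop : c ≠ ⊤)
    (hbound : ∀ n : ℕ, zf m (Finset.Icc (1:ℤ) (n:ℤ)) ≤ c ^ n) (n : ℕ) :
    zf m (Finset.Icc (1:ℤ) ((n:ℤ)+1)) ≤ c * zf m (Finset.Icc (1:ℤ) (n:ℤ)) := by
  by_cases h1 : zf m (Finset.Icc (1:ℤ) 1) = 0
  · have : zf m (Finset.Icc (1:ℤ) ((n:ℤ)+1)) = 0 := by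
      have hsub : Finset.Icc (1:ℤ) 1 ⊆ Finset.Icc (1:ℤ) ((n:ℤ)+1) :=
        Finset.Icc_subset_Icc le_rfl (by omega)
      exact le_antisymm (le_trans (zf_mono hsub) h1.le) (zero_le)
    rw [this]; exact zero_le
  · -- positive case: work in the reals
    set a : ℕ → ENNReal := fun k => zf m (Finset.Icc (1:ℤ) (k:ℤ)) with ha
    have hpos : ∀ k, a k ≠ 0 := zf_Icc_pos hPA hs h1
    have htop : ∀ k, a k ≠ ⊤ := fun k => zf_ne_top _
    set b : ℕ → ℝ := fun k => (a k).toReal with hb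
    have hbpos : ∀ k, 0 < b k := fun k => ENNReal.toReal_pos (hpos k) (htop k)
    set cr : ℝ := c.toReal with hcr
    have hcrpos : 0 < cr := ENNReal.toReal_pos hc0 hctop
    have hblog : ∀ k, b (k+1) * b (k+1) ≤ b (k+2) * b k := by
      intro k
      have := zf_Icc_logconvex hPA hs k
      have h' : a (k+1) * a (k+1) ≤ a (k+2) * a k := by
        rw [ha]
        simpa [show ((k+1 : ℕ) : ℤ) = (k:ℤ)+1 by push_cast; ring,
          show ((k+2 : ℕ) : ℤ) = (k:ℤ)+2 by push_cast; ring] using this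
      rw [hb]
      calc (a (k+1)).toReal * (a (k+1)).toReal = (a (k+1) * a (k+1)).toReal := by
            rw [ENNReal.toReal_mul]
        _ ≤ (a (k+2) * a k).toReal :=
            ENNReal.toReal_mono (ENNReal.mul_ne_top (htop _) (htop _)) h'
        _ = (a (k+2)).toReal * (a k).toReal := ENNReal.toReal_mul
    have hbbound : ∀ k, b k ≤ cr ^ k := by
      intro k
      have := hbound k
      rw [hb, hcr, ← ENNReal.toReal_pow]
      exact ENNReal.toReal_mono (ENNReal.pow_ne_top hctop) this
    -- reduce to a real inequality
    have e1 : zf m (Finset.Icc (1:ℤ) ((n:ℤ)+1)) = a (n+1) := by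
      simp only [ha]; norm_cast
    rw [e1, show zf m (Finset.Icc (1:ℤ) (n:ℤ)) = a n from rfl]
    rw [← ENNReal.toReal_le_toReal (htop (n+1)) (ENNReal.mul_ne_top hctop (htop n)),
      ENNReal.toReal_mul]
    by_contra hcon
    push_neg at hcon
    -- hcon : cr * b n < b (n+1)
    set r : ℕ → ℝ := fun k => b (k+1) / b k with hr
    have hrmono : Monotone r := by
      apply monotone_nat_of_le_succ
      intro k
      rw [hr]
      rw [div_le_div_iff₀ (hbpos k) (hbpos (k+1))]
      calc b (k+1) * b (k+1) ≤ b (k+2) * b k := hblog k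
        _ = b (k + 1 + 1) * b k := by norm_num
    have hrN : cr < r n := by
      rw [hr, lt_div_iff₀ (hbpos n)]
      exact hcon
    have hgrowth : ∀ k, b n * (r n) ^ k ≤ b (n + k) := by
      intro k
      induction k with
      | zero => simp
      | succ j ihj =>
          have hrj : r n ≤ r (n + j) := hrmono (by omega)
          have hbj : b (n + j) * r (n + j) = b (n + j + 1) := by
            rw [hr]
            rw [mul_comm, div_mul_cancel₀ _ (ne_of_gt (hbpos (n+j)))]
          calc b n * (r n) ^ (j+1) = (b n * (r n) ^ j) * r n := by ring
            _ ≤ b (n + j) * r n := by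
                apply mul_le_mul_of_nonneg_right ihj
                exact le_of_lt (hcrpos.trans hrN)
            _ ≤ b (n + j) * r (n + j) := by
                apply mul_le_mul_of_nonneg_left hrj (le_of_lt (hbpos _))
            _ = b (n + j + 1) := hbj
            _ = b (n + (j+1)) := by ring_nf
    -- contradiction with the exponential bound
    have hkey : ∀ k, (r n / cr) ^ k ≤ cr ^ n / b n := by
      intro k
      have h1' : b n * (r n) ^ k ≤ cr ^ n * cr ^ k := by
        calc b n * (r n) ^ k ≤ b (n + k) := hgrowth k
          _ ≤ cr ^ (n + k) := hbbound (n+k)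
          _ = cr ^ n * cr ^ k := pow_add cr n k
      rw [div_pow, div_le_div_iff₀ (pow_pos hcrpos k) (hbpos n)]
      calc (r n) ^ k * b n = b n * (r n) ^ k := by ring
        _ ≤ cr ^ n * cr ^ k := h1'
    obtain ⟨k, hk⟩ := pow_unbounded_of_one_lt (cr ^ n / b n) ((one_lt_div hcrpos).mpr hrN)
    exact absurd (hkey k) (not_le.mpr hk)

include hPA hs in
lemma zf_H {c : ENNReal} (hc0 : c ≠ 0) (hctop : c ≠ ⊤)
    (hbound : ∀ n : ℕ, zf m (Finset.Icc (1:ℤ) (n:ℤ)) ≤ c ^ n)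
    (G : Finset ℤ) (x : ℤ) (hx : ∀ j ∈ G, x < j) :
    zf m (insert x G) ≤ c * zf m G := by
  classical
  by_cases hG0 : zf m G = 0
  · have h0 : zf m (insert x G) = 0 :=
      le_antisymm (le_trans (zf_mono (Finset.subset_insert x G)) hG0.le) (zero_le)
    rw [h0]; exact zero_le
  by_cases h1 : zf m (Finset.Icc (1:ℤ) 1) = 0
  · have hxx : zf m {x} = zf m (Finset.Icc (1:ℤ) 1) := by
      have := zf_Icc_shift hs (x - 1) 1 1
      rw [show (1:ℤ) + (x-1) = x by ring] at this
      rw [← this, Finset.Icc_self]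
    have h0 : zf m (insert x G) = 0 := by
      refine le_antisymm ?_ (zero_le)
      calc zf m (insert x G) ≤ zf m {x} := zf_mono (by simp)
        _ = 0 := by rw [hxx, h1]
    rw [h0]; exact zero_le
  -- main case
  set M := (insert (x+1) G).max' (Finset.insert_nonempty _ _) with hM
  have hxM : x + 1 ≤ M := Finset.le_max' _ _ (Finset.mem_insert_self _ _)
  have hGM : ∀ j ∈ G, j ≤ M := fun j hj => Finset.le_max' _ _ (Finset.mem_insert_of_mem hj)
  set n : ℕ := (M - x).toNat with hn
  have hnz : (n:ℤ) = M - x := Int.toNat_of_nonneg (by omega)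
  set A' := Finset.Icc (x+1) M with hA'
  have hGA' : G ⊆ A' := fun j hj =>
    Finset.mem_Icc.mpr ⟨by have := hx j hj; omega, hGM j hj⟩
  have hA'val : zf m A' = zf m (Finset.Icc (1:ℤ) (n:ℤ)) := by
    have := zf_Icc_shift hs x 1 (n:ℤ)
    rw [show (1:ℤ) + x = x + 1 by ring, show (n:ℤ) + x = M by omega] at this
    exact this
  have hIval : zf m (Finset.Icc x M) = zf m (Finset.Icc (1:ℤ) ((n:ℤ)+1)) := by
    have := zf_Icc_shift hs (x-1) 1 ((n:ℤ)+1)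
    rw [show (1:ℤ) + (x-1) = x by ring, show (n:ℤ)+1 + (x-1) = M by omega] at this
    exact this
  have hA'pos : zf m A' ≠ 0 := by rw [hA'val]; exact zf_Icc_pos hPA hs h1 n
  have key1 : zf m (Finset.Icc x M) ≤ c * zf m A' := by
    rw [hIval, hA'val]; exact zf_step hPA hs hc0 hctop hbound n
  have key2 : zf m (insert x G) * zf m A' ≤ zf m (Finset.Icc x M) * zf m G := by
    have h := zf_corr hPA {x} (A' \ G) G
    rw [Finset.sdiff_union_of_subset hGA'] at h
    have e1 : ({x} : Finset ℤ) ∪ G = insert x G := (Finset.insert_eq x G).symm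
    have e2 : (({x} : Finset ℤ) ∪ (A' \ G)) ∪ G = Finset.Icc x M := by
      rw [Finset.union_assoc, Finset.sdiff_union_of_subset hGA']
      ext i
      simp only [Finset.mem_union, Finset.mem_singleton, hA', Finset.mem_Icc]
      omega
    rw [e1, e2] at h
    exact h
  have final : zf m (insert x G) * zf m A' ≤ (c * zf m G) * zf m A' := by
    calc zf m (insert x G) * zf m A' ≤ zf m (Finset.Icc x M) * zf m G := key2
      _ ≤ (c * zf m A') * zf m G := mul_le_mul_left key1 _
      _ = (c * zf m G) * zf m A' := by ring
  exact (ENNReal.mul_le_mul_iff_left hA'pos (zf_ne_top A')).mp final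


include hPA in
/-- The main finite-dimensional induction: domination of the Bernoulli product
measure by any conditioned version of `m`, for events depending on finitely
many coordinates lying to the left of the conditioning set. -/
lemma finite_dom {ρ : NNReal} (hρ1 : ρ ≤ 1)
    (hH : ∀ G : Finset ℤ, ∀ x : ℤ, (∀ j ∈ G, x < j) →
      zf m (insert x G) ≤ ((1 - ρ : NNReal) : ENNReal) * zf m G)
    {ν : Measure (ℤ → Bool)} (hν : IsBernoulliProduct ρ ν)
    (F : Finset ℤ) :
    ∀ B : Set (ℤ → Bool), IncreasingEvent B → DepOn B F →
    ∀ G : Finset ℤ, (∀ i ∈ F, ∀ j ∈ G, i < j) → m (ZeroOn (G : Set ℤ)) ≠ 0 →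
      ν B ≤ (m[|ZeroOn (G : Set ℤ)]) B := by
  classical
  set c : ENNReal := ((1 - ρ : NNReal) : ENNReal) with hc
  induction F using Finset.strongInduction with
  | _ F ih =>
  intro B hB hdep G hord hG0
  have hmZG : MeasurableSet (ZeroOn (G : Set ℤ)) :=
    measurableSet_zeroOn (Set.Finite.countable (Finset.finite_toSet G))
  set κ := m[|ZeroOn (G : Set ℤ)] with hκ
  haveI hκP : IsProbabilityMeasure κ := cond_isProbabilityMeasure hG0
  by_cases hFe : F = ∅
  · subst hFe
    rcases depOn_empty hdep with rfl | rfl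
    · simp
    · haveI := hν.1
      rw [measure_univ, measure_univ]
  · -- inductive step
    have hFne : F.Nonempty := Finset.nonempty_of_ne_empty hFe
    set x := F.max' hFne with hx
    set F' := F.erase x with hF'
    have hssub : F' ⊂ F := Finset.erase_ssubset (F.max'_mem hFne)
    have hxF : x ∈ F := F.max'_mem hFne
    set B₁ := (fun η => Function.update η x true) ⁻¹' B with hB₁
    set B₀ := (fun η => Function.update η x false) ⁻¹' B with hB₀
    have hB₁inc : IncreasingEvent B₁ := incr_preimage_update hB x true
    have hB₀inc : IncreasingEvent B₀ := incr_preimage_update hB x false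
    have hB₁dep : DepOn B₁ F' := hdep.preimage_update x true
    have hB₀dep : DepOn B₀ F' := hdep.preimage_update x false
    have hB₀₁ : B₀ ⊆ B₁ := update_false_subset_update_true hB x
    have hord' : ∀ i ∈ F', ∀ j ∈ G, i < j := fun i hi => hord i (Finset.mem_of_mem_erase hi)
    -- the two pieces of κ B
    have hsplit : κ B = κ (B ∩ {η | η x = true}) + κ (B ∩ {η | η x = false}) := by
      have hc' : B ∩ {η | η x = false} = B \ {η | η x = true} := by
        ext η; simp [Bool.not_eq_true]
      rw [hc', (measure_inter_add_diff B (measurableSet_pt x true)).symm]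
    -- true piece
    have htrue : κ B₁ * κ {η | η x = true} ≤ κ (B ∩ {η | η x = true}) := by
      rw [inter_pt_eq_update B x true]
      exact hPA G hG0 B₁ {η | η x = true} hB₁inc (increasingEvent_pt_true x)
    -- conditioning quantities
    set G' : Finset ℤ := insert x G with hG'
    have hZG' : ZeroOn ((G' : Finset ℤ) : Set ℤ) = ZeroOn ((G : Finset ℤ) : Set ℤ) ∩ ZeroOn {x} := by
      rw [hG', Finset.coe_insert, Set.insert_eq, zeroOn_union, Set.inter_comm]
    set q : ENNReal := (m (ZeroOn (G : Set ℤ)))⁻¹ * zf m G' with hq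
    have hGtop : m (ZeroOn (G : Set ℤ)) ≠ ⊤ := measure_ne_top m _
    have hxG : ∀ j ∈ G, x < j := fun j hj => hord x hxF j hj
    have hqc : q ≤ c := by
      rw [hq]
      calc (m (ZeroOn (G : Set ℤ)))⁻¹ * zf m G' ≤
          (m (ZeroOn (G : Set ℤ)))⁻¹ * (c * zf m G) :=
            mul_le_mul_right (hH G x hxG) _
        _ = c * ((m (ZeroOn (G : Set ℤ)))⁻¹ * zf m G) := by ring
        _ = c := by
            rw [show (m (ZeroOn (G : Set ℤ)))⁻¹ * zf m G = 1 from
              ENNReal.inv_mul_cancel hG0 hGtop, mul_one]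
    have hq1 : q ≤ 1 := le_trans hqc (by
      rw [hc]
      exact_mod_cast ENNReal.coe_le_one_iff.mpr tsub_le_self)
    have hqeq : κ (ZeroOn ({x} : Set ℤ)) = q := by
      rw [hκ, cond_apply hmZG, hq]
      congr 1
      rw [zf, ← hZG']
    -- false piece
    have hfalse : q * ν B₀ ≤ κ (B ∩ {η | η x = false}) := by
      have hrw : B ∩ {η | η x = false} = B₀ ∩ ZeroOn ({x} : Set ℤ) := by
        rw [inter_pt_eq_update B x false, pt_false_eq_zeroOn]
      rw [hrw]
      by_cases hq0 : zf m G' = 0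
      · have : q = 0 := by rw [hq, hq0, mul_zero]
        rw [this, zero_mul]
        exact zero_le
      · -- use the inductive hypothesis with conditioning set G'
        have hord'' : ∀ i ∈ F', ∀ j ∈ G', i < j := by
          intro i hi j hj
          rcases Finset.mem_insert.mp hj with rfl | hjG
          · exact lt_of_le_of_ne (F.le_max' i (Finset.mem_of_mem_erase hi))
              (Finset.ne_of_mem_erase hi)
          · exact hord i (Finset.mem_of_mem_erase hi) j hjG
        have hIH0 := ih F' hssub B₀ hB₀inc hB₀dep G' hord'' hq0
        have hκ'app : (m[|ZeroOn ((G' : Finset ℤ) : Set ℤ)]) B₀ =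
            (zf m G')⁻¹ * m (ZeroOn ((G' : Finset ℤ) : Set ℤ) ∩ B₀) := by
          rw [cond_apply (measurableSet_zeroOn (Set.Finite.countable (Finset.finite_toSet G')))]
          rfl
        have hκapp : κ (B₀ ∩ ZeroOn ({x} : Set ℤ)) =
            (m (ZeroOn (G : Set ℤ)))⁻¹ * m (ZeroOn ((G' : Finset ℤ) : Set ℤ) ∩ B₀) := by
          rw [hκ, cond_apply hmZG]
          congr 1
          rw [hZG']
          rw [Set.inter_assoc, Set.inter_comm B₀]
        calc q * ν B₀ ≤ q * ((m[|ZeroOn ((G' : Finset ℤ) : Set ℤ)]) B₀) :=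
              mul_le_mul_right hIH0 _
          _ = κ (B₀ ∩ ZeroOn ({x} : Set ℤ)) := by
              rw [hκ'app, hκapp, hq]
              rw [show (m (ZeroOn (G : Set ℤ)))⁻¹ * zf m G' *
                  ((zf m G')⁻¹ * m (ZeroOn ((G' : Finset ℤ) : Set ℤ) ∩ B₀))
                  = (m (ZeroOn (G : Set ℤ)))⁻¹ * (zf m G' * (zf m G')⁻¹) *
                    m (ZeroOn ((G' : Finset ℤ) : Set ℤ) ∩ B₀) by ring,
                ENNReal.mul_inv_cancel hq0 (zf_ne_top G'), mul_one]
    -- probability of the true point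
    have hp : κ {η | η x = true} = 1 - q := by
      have hcompl : {η : ℤ → Bool | η x = true} = (ZeroOn ({x} : Set ℤ))ᶜ := by
        rw [← pt_false_eq_zeroOn]
        ext η; simp [Bool.not_eq_true]
      rw [hcompl, prob_compl_eq_one_sub (measurableSet_zeroOn (Set.countable_singleton x)),
        hqeq]
    have hpρ : (ρ : ENNReal) ≤ 1 - q := by
      have h1 : (1:ENNReal) - c ≤ 1 - q := tsub_le_tsub_left hqc 1
      have h2 : (1:ENNReal) - c = ρ := by
        rw [hc, ENNReal.coe_sub]
        rw [ENNReal.coe_one]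
        exact ENNReal.sub_sub_cancel ENNReal.one_ne_top (by exact_mod_cast hρ1)
      rwa [h2] at h1
    -- the ν-side decomposition
    have hν1 : ν (B ∩ {η | η x = true}) = ν B₁ * ρ := by
      have hcyl : Cyl ({x} : Finset ℤ) ∅ = {η : ℤ → Bool | η x = true} := by
        ext η; simp [Cyl]
      have := bernoulli_product_formula hν F' B₁ hB₁dep {x} ∅ (by simp)
        (by simp [hF']) (by simp)
      rw [hcyl] at this
      rw [inter_pt_eq_update B x true, ← hB₁, this]
      simp
    have hν0 : ν (B ∩ {η | η x = false}) = ν B₀ * c := by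
      have hcyl : Cyl (∅ : Finset ℤ) {x} = {η : ℤ → Bool | η x = false} := by
        ext η; simp [Cyl]
      have := bernoulli_product_formula hν F' B₀ hB₀dep ∅ {x} (by simp)
        (by simp) (by simp [hF'])
      rw [hcyl] at this
      rw [inter_pt_eq_update B x false, ← hB₀, this]
      simp [hc]
    have hνsplit : ν B = ν B₁ * ρ + ν B₀ * c := by
      have hc' : B ∩ {η | η x = false} = B \ {η | η x = true} := by
        ext η; simp [Bool.not_eq_true]
      rw [← hν1, ← hν0, hc', measure_inter_add_diff B (measurableSet_pt x true)]
    -- assemble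
    have hν01 : ν B₀ ≤ ν B₁ := measure_mono hB₀₁
    have hIH1 := ih F' hssub B₁ hB₁inc hB₁dep G hord' hG0
    have hfinal : ν B₁ * ρ + ν B₀ * c ≤ κ B₁ * (1 - q) + q * ν B₀ := by
      have hcsplit : c = ((1 - q) - ρ) + q := by
        have e1 : (1:ENNReal) - q - ρ = (1 - ρ) - q := by
          rw [tsub_tsub, tsub_tsub, add_comm]
        rw [e1]
        have e2 : (1:ENNReal) - ρ = c := by
          rw [hc, ENNReal.coe_sub, ENNReal.coe_one]
        rw [e2, tsub_add_cancel_of_le hqc]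
      calc ν B₁ * ρ + ν B₀ * c
          = ν B₁ * ρ + ν B₀ * ((1 - q) - ρ) + ν B₀ * q := by
            rw [hcsplit]; ring
        _ ≤ ν B₁ * ρ + ν B₁ * ((1 - q) - ρ) + ν B₀ * q :=
            add_le_add (add_le_add le_rfl (mul_le_mul_left hν01 _)) le_rfl
        _ = ν B₁ * (ρ + ((1 - q) - ρ)) + ν B₀ * q := by ring
        _ = ν B₁ * (1 - q) + ν B₀ * q := by
            rw [add_tsub_cancel_of_le hpρ]
        _ ≤ κ B₁ * (1 - q) + q * ν B₀ := by
            rw [mul_comm (ν B₀) q]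
            exact add_le_add (mul_le_mul_left hIH1 _) le_rfl
    calc ν B = ν B₁ * ρ + ν B₀ * c := hνsplit
      _ ≤ κ B₁ * (1 - q) + q * ν B₀ := hfinal
      _ = κ B₁ * κ {η | η x = true} + q * ν B₀ := by rw [hp]
      _ ≤ κ (B ∩ {η | η x = true}) + κ (B ∩ {η | η x = false}) :=
          add_le_add htrue hfalse
      _ = κ B := hsplit.symm

section Ext

/-- finite-window cylinder approximation of a set -/
def cylApprox (C : Set (ℤ → Bool)) (n : ℕ) : Set (ℤ → Bool) :=
  {η | ∃ ξ ∈ C, ∀ i ∈ Finset.Icc (-(n:ℤ)) (n:ℤ), ξ i = η i}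

lemma subset_cylApprox (C : Set (ℤ → Bool)) (n : ℕ) : C ⊆ cylApprox C n :=
  fun η hη => ⟨η, hη, fun _ _ => rfl⟩

lemma depOn_cylApprox (C : Set (ℤ → Bool)) (n : ℕ) :
    DepOn (cylApprox C n) (Finset.Icc (-(n:ℤ)) (n:ℤ)) := by
  rintro η η' hag ⟨ξ, hξ, hξη⟩
  exact ⟨ξ, hξ, fun i hi => (hξη i hi).trans (hag i hi)⟩

lemma cylApprox_incr {C : Set (ℤ → Bool)}
    (hmono : ∀ ⦃ξ η : ℤ → Bool⦄, ξ ≤ η → ξ ∈ C → η ∈ C) (n : ℕ) :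
    ∀ ⦃η η' : ℤ → Bool⦄, η ≤ η' → η ∈ cylApprox C n → η' ∈ cylApprox C n := by
  classical
  rintro η η' hle ⟨ξ, hξ, hξη⟩
  refine ⟨fun i => if i ∈ Finset.Icc (-(n:ℤ)) (n:ℤ) then η' i else ξ i, ?_, ?_⟩
  · refine hmono (fun i => ?_) hξ
    by_cases hi : i ∈ Finset.Icc (-(n:ℤ)) (n:ℤ)
    · simp only [hi, if_true]
      exact (hξη i hi) ▸ hle i
    · simp [hi]
  · intro i hi; simp [hi]

lemma cylApprox_antitone (C : Set (ℤ → Bool)) : Antitone (cylApprox C) := by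
  intro a b hab η hη
  obtain ⟨ξ, hξ, hξη⟩ := hη
  exact ⟨ξ, hξ, fun i hi => hξη i (Finset.Icc_subset_Icc (by omega) (by omega) hi)⟩

lemma iInter_cylApprox {C : Set (ℤ → Bool)} (hC : IsClosed C) :
    (⋂ n, cylApprox C n) ⊆ C := by
  intro η hη
  by_contra hηC
  have hopen : IsOpen Cᶜ := hC.isOpen_compl
  obtain ⟨I, u, hu, hsub⟩ := isOpen_pi_iff.mp hopen η hηC
  obtain ⟨n, hn⟩ : ∃ n : ℕ, ∀ i ∈ I, i ∈ Finset.Icc (-(n:ℤ)) (n:ℤ) := by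
    refine ⟨(I.sup fun i => i.natAbs), fun i hi => ?_⟩
    have h2 : i.natAbs ≤ (I.sup fun i => i.natAbs) :=
      Finset.le_sup (f := fun i : ℤ => i.natAbs) hi
    rw [Finset.mem_Icc]
    omega
  obtain ⟨ξ, hξC, hξη⟩ := Set.mem_iInter.mp hη n
  have : ξ ∈ Set.pi I u := by
    intro i hi
    rw [hξη i (hn i hi)]
    exact (hu i hi).2
  exact (hsub this) hξC

/-- upward closure -/
def upClos (K : Set (ℤ → Bool)) : Set (ℤ → Bool) := {η | ∃ ξ ∈ K, ξ ≤ η}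

lemma subset_upClos (K : Set (ℤ → Bool)) : K ⊆ upClos K := fun η hη => ⟨η, hη, le_rfl⟩

lemma upClos_incr (K : Set (ℤ → Bool)) :
    ∀ ⦃η η' : ℤ → Bool⦄, η ≤ η' → η ∈ upClos K → η' ∈ upClos K := by
  rintro η η' hle ⟨ξ, hξ, hξη⟩
  exact ⟨ξ, hξ, hξη.trans hle⟩

lemma upClos_subset {K B : Set (ℤ → Bool)} (hKB : K ⊆ B)
    (hmono : ∀ ⦃ξ η : ℤ → Bool⦄, ξ ≤ η → ξ ∈ B → η ∈ B) : upClos K ⊆ B := by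
  rintro η ⟨ξ, hξ, hle⟩
  exact hmono hle (hKB hξ)

lemma isCompact_upClos {K : Set (ℤ → Bool)} (hK : IsCompact K) : IsCompact (upClos K) := by
  have himg : upClos K =
      (fun p : (ℤ → Bool) × (ℤ → Bool) => p.1 ⊔ p.2) '' (K ×ˢ Set.univ) := by
    ext η
    constructor
    · rintro ⟨ξ, hξ, hle⟩
      exact ⟨(ξ, η), ⟨hξ, trivial⟩, sup_eq_right.mpr hle⟩
    · rintro ⟨⟨ξ, w⟩, ⟨hξ, -⟩, rfl⟩
      exact ⟨ξ, hξ, le_sup_left⟩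
  rw [himg]
  apply IsCompact.image (hK.prod isCompact_univ)
  apply continuous_pi
  intro i
  have : (fun p : (ℤ → Bool) × (ℤ → Bool) => (p.1 ⊔ p.2) i)
      = (fun q : Bool × Bool => q.1 ⊔ q.2) ∘ (fun p : (ℤ → Bool) × (ℤ → Bool) => (p.1 i, p.2 i)) :=
    rfl
  rw [this]
  exact (continuous_of_discreteTopology).comp
    (((continuous_apply i).comp continuous_fst).prodMk ((continuous_apply i).comp continuous_snd))

/-- The extension step: finite-dimensional domination implies full domination. -/
lemma dom_of_finite_dom {m ν : Measure (ℤ → Bool)} [IsProbabilityMeasure m]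
    [IsProbabilityMeasure ν]
    (hfin : ∀ F : Finset ℤ, ∀ B : Set (ℤ → Bool), IncreasingEvent B → DepOn B F → ν B ≤ m B) :
    ∀ B : Set (ℤ → Bool), IncreasingEvent B → ν B ≤ m B := by
  intro B hB
  -- first: closed increasing sets
  have hclosed : ∀ C : Set (ℤ → Bool), IsClosed C →
      (∀ ⦃ξ η : ℤ → Bool⦄, ξ ≤ η → ξ ∈ C → η ∈ C) → ν C ≤ m C := by
    intro C hC hmono
    have hCn : ∀ n, ν C ≤ m (cylApprox C n) := by
      intro n
      have hdep := depOn_cylApprox C n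
      calc ν C ≤ ν (cylApprox C n) := measure_mono (subset_cylApprox C n)
        _ ≤ m (cylApprox C n) :=
            hfin _ _ ⟨hdep.measurableSet, fun ξ η hle => cylApprox_incr hmono n hle⟩ hdep
    have hiInter : m (⋂ n, cylApprox C n) = ⨅ n, m (cylApprox C n) :=
      (cylApprox_antitone C).measure_iInter
        (fun n => ((depOn_cylApprox C n).measurableSet).nullMeasurableSet)
        ⟨0, measure_ne_top m _⟩
    have hsub : (⋂ n, cylApprox C n) = C :=
      Set.Subset.antisymm (iInter_cylApprox hC)
        (Set.subset_iInter (fun n => subset_cylApprox C n))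
    calc ν C ≤ ⨅ n, m (cylApprox C n) := le_iInf hCn
      _ = m (⋂ n, cylApprox C n) := hiInter.symm
      _ = m C := by rw [hsub]
  -- inner regularity
  rw [hB.1.measure_eq_iSup_isCompact ν]
  refine iSup_le (fun K => iSup_le (fun hKB => iSup_le (fun hK => ?_)))
  have hup : upClos K ⊆ B := upClos_subset hKB hB.2
  calc ν K ≤ ν (upClos K) := measure_mono (subset_upClos K)
    _ ≤ m (upClos K) :=
        hclosed _ (isCompact_upClos hK).isClosed (upClos_incr K)
    _ ≤ m B := measure_mono hup

end Ext

/-- Master abstract lemma on `{0,1}^ℤ`. -/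
lemma master {m : Measure (ℤ → Bool)} [IsProbabilityMeasure m]
    (hPA : ∀ G : Finset ℤ, m (ZeroOn (G : Set ℤ)) ≠ 0 →
      PositivelyAssociated (m[|ZeroOn (G : Set ℤ)]))
    (hs : ∀ A : Finset ℤ, zf m (A.image (· + 1)) = zf m A)
    {ρ : NNReal} (hρ1 : ρ < 1)
    (hbound : ∀ n : ℕ, 1 ≤ n →
      zf m (Finset.Icc (1:ℤ) (n:ℤ)) ≤ ((1 - ρ : NNReal) : ENNReal) ^ n)
    (ν : Measure (ℤ → Bool)) (hν : IsBernoulliProduct ρ ν) :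
    ∀ B : Set (ℤ → Bool), IncreasingEvent B → ν B ≤ m B := by
  haveI : IsProbabilityMeasure ν := hν.1
  set c : ENNReal := ((1 - ρ : NNReal) : ENNReal) with hc
  have hc0 : c ≠ 0 := by
    rw [hc]
    exact_mod_cast (tsub_pos_of_lt hρ1).ne'
  have hctop : c ≠ ⊤ := ENNReal.coe_ne_top
  have hbound' : ∀ n : ℕ, zf m (Finset.Icc (1:ℤ) (n:ℤ)) ≤ c ^ n := by
    intro n
    rcases Nat.eq_zero_or_pos n with rfl | hn
    · simp [show Finset.Icc (1:ℤ) ((0:ℕ):ℤ) = ∅ from Finset.Icc_eq_empty (by omega), zf_empty]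
    · exact hbound n hn
  have hH := zf_H hPA hs hc0 hctop hbound'
  have hfin : ∀ F : Finset ℤ, ∀ B : Set (ℤ → Bool),
      IncreasingEvent B → DepOn B F → ν B ≤ m B := by
    intro F B hB hdep
    have h := finite_dom hPA hρ1.le hH hν F B hB hdep ∅ (by simp) (by
      rw [Finset.coe_empty, zeroOn_empty, measure_univ]; exact one_ne_zero)
    rwa [Finset.coe_empty, zeroOn_empty, cond_univ] at h
  exact dom_of_finite_dom hfin

end Z2
end Dom

/-- The key step (3.8) in the proof of Theorem 1.4: for a shift-invariant
downward FKG measure on `{0,1}^{Δ×ℤ}` whose columns of zeros satisfy an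
exponential bound, the process of column maxima stochastically dominates the
Bernoulli product measure with density `ρ` on `{0,1}^ℤ`. -/
theorem columnMax_dominates_bernoulli {Δ : Type*} [Fintype Δ] [Nonempty Δ]
    (μ : Measure (Δ × ℤ → Bool)) [IsProbabilityMeasure μ]
    (htrans : μ.map (fun η (p : Δ × ℤ) => η (p.1, p.2 + 1)) = μ)
    (hdfkg : DownwardFKG μ) (ρ : NNReal) (hρ₀ : 0 < ρ) (hρ₁ : ρ < 1)
    (hrun : ∀ n : ℕ, 1 ≤ n →
      μ (ZeroOn {p : Δ × ℤ | 1 ≤ p.2 ∧ p.2 ≤ (n : ℤ)}) ≤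
        ((1 - ρ : NNReal) : ENNReal) ^ n) :
    ∀ ν : Measure (ℤ → Bool), IsBernoulliProduct ρ ν →
      StochDom (μ.map (fun η => columnMax η)) ν := by
  classical
  intro ν hν B hB
  set Y : (Δ × ℤ → Bool) → (ℤ → Bool) := fun η => columnMax η with hYdef
  -- measurability of Y
  have hYmeas : Measurable Y := by
    apply measurable_pi_lambda
    intro i
    have hco : (fun η : Δ × ℤ → Bool => columnMax η i)
        = (fun v : Δ → Bool => Finset.univ.sup v) ∘ (fun η (y : Δ) => η (y, i)) := rfl
    rw [hco]
    exact Measurable.comp (fun t _ => (Set.to_countable _).measurableSet)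
      (measurable_pi_lambda _ (fun y => measurable_pi_apply (y, i)))
  have hYmono : ∀ ⦃η η' : Δ × ℤ → Bool⦄, η ≤ η' → Y η ≤ Y η' := by
    intro η η' hle i
    exact Finset.sup_mono_fun (fun y _ => hle (y, i))
  -- preimage of zero sets
  have hpre : ∀ S : Set ℤ, Y ⁻¹' (ZeroOn S) = ZeroOn {p : Δ × ℤ | p.2 ∈ S} := by
    intro S
    ext η
    simp only [Set.mem_preimage, ZeroOn, Set.mem_setOf_eq]
    constructor
    · intro h p hp
      have h2 : Finset.univ.sup (fun y : Δ => η (y, p.2)) = ⊥ := h p.2 hp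
      have h3 := (Finset.sup_eq_bot_iff _ _).mp h2 p.1 (Finset.mem_univ _)
      simpa using h3
    · intro h i hi
      refine (Finset.sup_eq_bot_iff _ _).mpr (fun y _ => ?_)
      exact h (y, i) hi
  have hcnt : ∀ S : Set ℤ, S.Countable → Set.Countable {p : Δ × ℤ | p.2 ∈ S} := by
    intro S hS
    have : {p : Δ × ℤ | p.2 ∈ S} = (Set.univ : Set Δ) ×ˢ S := by
      ext p; simp
    rw [this]
    exact Set.Countable.prod (Set.to_countable _) hS
  set m : Measure (ℤ → Bool) := μ.map Y with hm
  haveI : IsProbabilityMeasure m := Measure.isProbabilityMeasure_map hYmeas.aemeasurable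
  have hm_app : ∀ S : Set ℤ, S.Countable → m (ZeroOn S) = μ (ZeroOn {p : Δ × ℤ | p.2 ∈ S}) := by
    intro S hS
    rw [hm, Measure.map_apply hYmeas (Dom.measurableSet_zeroOn hS), hpre]
  -- positive association of conditioned pushforwards
  have hPA : ∀ G : Finset ℤ, m (ZeroOn (G : Set ℤ)) ≠ 0 →
      PositivelyAssociated (m[|ZeroOn (G : Set ℤ)]) := by
    intro G hG0
    set T : Finset (Δ × ℤ) := Finset.univ ×ˢ G with hT
    have hTco : (T : Set (Δ × ℤ)) = {p : Δ × ℤ | p.2 ∈ (G : Set ℤ)} := by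
      ext p; simp [hT, Finset.mem_product]
    have hGmeas : MeasurableSet (ZeroOn (G : Set ℤ)) :=
      Dom.measurableSet_zeroOn (Finset.countable_toSet G)
    have hTmeas : MeasurableSet (ZeroOn (T : Set (Δ × ℤ))) :=
      Dom.measurableSet_zeroOn (Finset.countable_toSet T)
    have hppre : Y ⁻¹' (ZeroOn (G : Set ℤ)) = ZeroOn (T : Set (Δ × ℤ)) := by
      rw [hTco]; exact hpre _
    have hval : m (ZeroOn (G : Set ℤ)) = μ (ZeroOn (T : Set (Δ × ℤ))) := by
      rw [hm, Measure.map_apply hYmeas hGmeas, hppre]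
    have hμT0 : 0 < μ (ZeroOn (T : Set (Δ × ℤ))) := by
      rw [← hval]
      exact lt_of_le_of_ne (zero_le) (Ne.symm hG0)
    have hPAμ := hdfkg T hμT0
    intro B₁ B₂ h₁ h₂
    have key : ∀ C : Set (ℤ → Bool), MeasurableSet C →
        (m[|ZeroOn (G : Set ℤ)]) C = (μ[|ZeroOn (T : Set (Δ × ℤ))]) (Y ⁻¹' C) := by
      intro C hCm
      rw [cond_apply hGmeas, cond_apply hTmeas, hval]
      congr 1
      rw [hm, Measure.map_apply hYmeas (hGmeas.inter hCm), Set.preimage_inter, hppre]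
    have hYB : ∀ C : Set (ℤ → Bool), IncreasingEvent C → IncreasingEvent (Y ⁻¹' C) :=
      fun C hC => ⟨hC.1.preimage hYmeas, fun ξ η hle hξ => hC.2 (hYmono hle) hξ⟩
    rw [key _ h₁.1, key _ h₂.1, key _ (h₁.1.inter h₂.1), Set.preimage_inter]
    exact hPAμ _ _ (hYB B₁ h₁) (hYB B₂ h₂)
  -- shift invariance
  have hσmeas : Measurable (fun η : Δ × ℤ → Bool => fun p : Δ × ℤ => η (p.1, p.2 + 1)) :=
    measurable_pi_lambda _ (fun p => measurable_pi_apply (p.1, p.2 + 1))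
  have hs : ∀ A : Finset ℤ, Dom.zf m (A.image (· + 1)) = Dom.zf m A := by
    intro A
    have e1 : Dom.zf m (A.image (· + 1)) =
        μ (ZeroOn {p : Δ × ℤ | p.2 ∈ ((A.image (· + 1) : Finset ℤ) : Set ℤ)}) :=
      hm_app _ (Finset.countable_toSet _)
    have e2 : Dom.zf m A = μ (ZeroOn {p : Δ × ℤ | p.2 ∈ (A : Set ℤ)}) :=
      hm_app _ (Finset.countable_toSet _)
    have e3 : μ (ZeroOn {p : Δ × ℤ | p.2 ∈ (A : Set ℤ)}) =
        (μ.map (fun η (p : Δ × ℤ) => η (p.1, p.2 + 1)))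
          (ZeroOn {p : Δ × ℤ | p.2 ∈ (A : Set ℤ)}) := by rw [htrans]
    rw [Measure.map_apply hσmeas
      (Dom.measurableSet_zeroOn (hcnt _ (Finset.countable_toSet A)))] at e3
    have e4 : (fun η : Δ × ℤ → Bool => fun p : Δ × ℤ => η (p.1, p.2 + 1)) ⁻¹'
        (ZeroOn {p : Δ × ℤ | p.2 ∈ (A : Set ℤ)}) =
        ZeroOn {p : Δ × ℤ | p.2 ∈ ((A.image (· + 1) : Finset ℤ) : Set ℤ)} := by
      ext η
      simp only [Set.mem_preimage, ZeroOn, Set.mem_setOf_eq, Finset.coe_image,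
        Set.mem_image, Finset.mem_coe]
      constructor
      · rintro h p ⟨j, hj, hpj⟩
        have h5 := h (p.1, j) hj
        have h6 : (p.1, j + 1) = p := by
          rw [hpj]
        rw [h6] at h5
        exact h5
      · intro h p hp
        exact h (p.1, p.2 + 1) ⟨p.2, hp, rfl⟩
    rw [e4] at e3
    rw [e1, e2, e3]
  -- exponential bound
  have hbound : ∀ n : ℕ, 1 ≤ n →
      Dom.zf m (Finset.Icc (1:ℤ) (n:ℤ)) ≤ ((1 - ρ : NNReal) : ENNReal) ^ n := by
    intro n hn
    have e1 : Dom.zf m (Finset.Icc (1:ℤ) (n:ℤ)) =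
        μ (ZeroOn {p : Δ × ℤ | p.2 ∈ ((Finset.Icc (1:ℤ) (n:ℤ) : Finset ℤ) : Set ℤ)}) :=
      hm_app _ (Finset.countable_toSet _)
    have e2 : {p : Δ × ℤ | p.2 ∈ ((Finset.Icc (1:ℤ) (n:ℤ) : Finset ℤ) : Set ℤ)} =
        {p : Δ × ℤ | 1 ≤ p.2 ∧ p.2 ≤ (n : ℤ)} := by
      ext p; simp [Finset.mem_Icc]
    rw [e1, e2]
    exact hrun n hn
  exact Dom.master hPA hs hρ₁ hbound ν hν B hB
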